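/- Every τ-compact set of arcs in the infinite strip satisfies condition (B): every marked point that is lower right T-bounded is upper right T-bounded, and every marked point that is upper left T-bounded is lower left T-bounded. -/

import Mathlib

/-- A marked point of the infinite strip `B∞`: an upper point `ℓ i` or a lower point `r j`. -/
inductive MPoint : Type
  | up : ℤ → MPoint
  | low : ℤ → MPoint
deriving DecidableEq

namespace Strip

open MPoint

/-- A curve is an unordered pair of marked points. -/
abbrev Curve := Sym2 MPoint

/-- Edges of the strip: `{ℓ_i, ℓ_{i+1}}` or `{r_i, r_{i+1}}`. -/
def IsEdge (c : Curve) : Prop :=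
  ∃ i : ℤ, c = s(up i, up (i + 1)) ∨ c = s(low i, low (i + 1))

/-- Arcs: non-degenerate, non-edge unordered pairs of marked points. -/
def IsArc (c : Curve) : Prop := ¬ c.IsDiag ∧ ¬ IsEdge c

/-- A connecting arc joins an upper and a lower marked point. -/
def IsConnecting (c : Curve) : Prop := ∃ i j : ℤ, c = s(up i, low j)

/-- The crossing relation on curves of the strip, given by the explicit index
conditions of Liu–Paquette (cases according to the type of `u`). -/
def Crosses (u v : Curve) : Prop :=
  (∃ i j p q : ℤ, ((i < p ∧ p < j ∧ j < q) ∨ (p < i ∧ i < q ∧ q < j)) ∧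
      u = s(up i, up j) ∧ v = s(up p, up q)) ∨
  (∃ i j p q : ℤ, (i < p ∧ p < j) ∧ u = s(up i, up j) ∧ v = s(up p, low q)) ∨
  (∃ i j p q : ℤ, ((i > p ∧ p > j ∧ j > q) ∨ (p > i ∧ i > q ∧ q > j)) ∧
      u = s(low i, low j) ∧ v = s(low p, low q)) ∨
  (∃ i j p q : ℤ, (i > q ∧ q > j) ∧ u = s(low i, low j) ∧ v = s(up p, low q)) ∨
  (∃ i j p q : ℤ, (p < i ∧ i < q) ∧ u = s(up i, low j) ∧ v = s(up p, up q)) ∨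
  (∃ i j p q : ℤ, (p > j ∧ j > q) ∧ u = s(up i, low j) ∧ v = s(low p, low q)) ∨
  (∃ i j p q : ℤ, ((i > p ∧ j > q) ∨ (i < p ∧ j < q)) ∧
      u = s(up i, low j) ∧ v = s(up p, low q))

/-- The translation `τ` on marked points, shifting indices by `+1`. -/
def tauP : MPoint → MPoint
  | up i => up (i + 1)
  | low i => low (i + 1)

/-- The inverse translation `τ⁻¹` on marked points. -/
def tauInvP : MPoint → MPoint
  | up i => up (i - 1)
  | low i => low (i - 1)

/-- The translation `τ` on curves. -/
def tau (c : Curve) : Curve := c.map tauP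

/-- The inverse translation `τ⁻¹` on curves. -/
def tauInv (c : Curve) : Curve := c.map tauInvP

/-- `key p q` is the position of the curve `[p,q]` in the clockwise linear order `>_p`
on the set `[p,−]` of curves at `p`, valued in `ℤ ×ₗ ℤ` (lexicographic order).
For `p = ℓ_P`: curves to upper points right of `p` (tier 2, increasing with index),
then connecting curves (tier 1, decreasing with index),
then curves to upper points left of `p` (tier 0, decreasing with index); dually for lower `p`. -/
def key : MPoint → MPoint → ℤ ×ₗ ℤ
  | up P, up e => if P < e then toLex (2, e) else toLex (0, -e)
  | up _, low c => toLex (1, -c)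
  | low P, low e => if P < e then toLex (2, e) else toLex (0, -e)
  | low _, up c => toLex (1, -c)

/-- `GtAt p u v` means `u >_p v`: `u` and `v` are curves sharing the endpoint `p`
and `u` is bigger than `v` in the clockwise linear order at `p`. -/
def GtAt (p : MPoint) (u v : Curve) : Prop :=
  ∃ x y : MPoint, x ≠ p ∧ y ≠ p ∧ u = s(p, x) ∧ v = s(p, y) ∧ key p y < key p x

/-- `u₃` is a middle term from `u₂` to `u₁`: a curve (arc or edge) with
`u₂ <_{p₁} u₃ <_{p₂} u₁` for some marked points `p₁`, `p₂`. -/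
def IsMiddleTerm (u₂ u₁ u₃ : Curve) : Prop :=
  ¬ u₃.IsDiag ∧ ∃ p₁ p₂ : MPoint, GtAt p₁ u₃ u₂ ∧ GtAt p₂ u₁ u₃

/-- `nc T`: the set of arcs crossing no arc of `T`. -/
def nc (T : Set Curve) : Set Curve :=
  {u | IsArc u ∧ ∀ v ∈ T, ¬ Crosses u v}

/-- `T` is a Ptolemy diagram: a set of arcs such that for any two crossing arcs
`[p,q],[i,j] ∈ T`, those of `[p,i],[p,j],[q,i],[q,j]` which are arcs lie in `T`. -/
def IsPtolemy (T : Set Curve) : Prop :=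
  (∀ u ∈ T, IsArc u) ∧
  ∀ p q i j : MPoint, s(p, q) ∈ T → s(i, j) ∈ T → Crosses s(p, q) s(i, j) →
    (IsArc s(p, i) → s(p, i) ∈ T) ∧ (IsArc s(p, j) → s(p, j) ∈ T) ∧
    (IsArc s(q, i) → s(q, i) ∈ T) ∧ (IsArc s(q, j) → s(q, j) ∈ T)

/-- `T_u`: the set of arcs of `T` crossing `u`. -/
def crossSet (T : Set Curve) (u : Curve) : Set Curve := {v ∈ T | Crosses v u}

/-- `p` is upper left `T`-bounded: `[p, ℓ_i] ∉ T` for all sufficiently small `i`. -/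
def UpperLeftBounded (T : Set Curve) (p : MPoint) : Prop :=
  ∃ j : ℤ, ∀ i : ℤ, i < j → s(p, up i) ∉ T

/-- `p` is upper right `T`-bounded: `[p, ℓ_i] ∉ T` for all sufficiently large `i`. -/
def UpperRightBounded (T : Set Curve) (p : MPoint) : Prop :=
  ∃ j : ℤ, ∀ i : ℤ, i > j → s(p, up i) ∉ T

/-- `p` is lower left `T`-bounded: `[p, r_i] ∉ T` for all sufficiently large `i`. -/
def LowerLeftBounded (T : Set Curve) (p : MPoint) : Prop :=
  ∃ j : ℤ, ∀ i : ℤ, i > j → s(p, low i) ∉ T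

/-- `p` is lower right `T`-bounded: `[p, r_i] ∉ T` for all sufficiently small `i`. -/
def LowerRightBounded (T : Set Curve) (p : MPoint) : Prop :=
  ∃ j : ℤ, ∀ i : ℤ, i < j → s(p, low i) ∉ T

/-- Condition (B): every lower right `T`-bounded marked point is upper right
`T`-bounded, and every upper left `T`-bounded marked point is lower left `T`-bounded. -/
def CondB (T : Set Curve) : Prop :=
  ∀ p : MPoint, (LowerRightBounded T p → UpperRightBounded T p) ∧
    (UpperLeftBounded T p → LowerLeftBounded T p)

/-- Condition (B'): the dual of condition (B). -/
def CondB' (T : Set Curve) : Prop :=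
  ∀ p : MPoint, (LowerLeftBounded T p → UpperLeftBounded T p) ∧
    (UpperRightBounded T p → LowerRightBounded T p)

/-- Condition (C): `T ∪ nc T` contains a connecting arc. -/
def CondC (T : Set Curve) : Prop := ∃ c ∈ T ∪ nc T, IsConnecting c

/-- `S0` is a τ-basis of `Ω`: a subset of `Ω` such that for every `u₁ ∈ Ω` there is
`u₂ ∈ S0` with `τ u₂` crossing `u₁`, and all middle terms from `u₂` to `u₁` lie in `Ω`
whenever `u₂` crosses `u₁`. -/
def IsTauBasis (Ω S0 : Set Curve) : Prop :=
  S0 ⊆ Ω ∧ ∀ u₁ ∈ Ω, ∃ u₂ ∈ S0, Crosses (tau u₂) u₁ ∧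
    (Crosses u₂ u₁ → ∀ u₃ : Curve, IsMiddleTerm u₂ u₁ u₃ → u₃ ∈ Ω)

/-- `T` is τ-compact: for every arc `u`, the set `T_u` admits a finite τ-basis. -/
def TauCompact (T : Set Curve) : Prop :=
  ∀ u : Curve, IsArc u → ∃ S0 : Set Curve, S0.Finite ∧ IsTauBasis (crossSet T u) S0

/-- `T̄`: the set `T` together with all edges of the strip. -/
def withEdges (T : Set Curve) : Set Curve := T ∪ {c | IsEdge c}

end Strip

namespace Strip

open MPoint

/-! ### Basic helpers -/

lemma toLex_lt {a b c d : ℤ} (h : a < c ∨ (a = c ∧ b < d)) :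
    toLex (a, b) < toLex (c, d) := Prod.Lex.lt_iff.mpr h

@[simp] lemma key_up_up (P e : ℤ) :
    key (up P) (up e) = if P < e then toLex (2, e) else toLex (0, -e) := rfl
@[simp] lemma key_up_low (P c : ℤ) : key (up P) (low c) = toLex (1, -c) := rfl
@[simp] lemma key_low_low (P e : ℤ) :
    key (low P) (low e) = if P < e then toLex (2, e) else toLex (0, -e) := rfl
@[simp] lemma key_low_up (P c : ℤ) : key (low P) (up c) = toLex (1, -c) := rfl

/-- index of a marked point -/
def idx : MPoint → ℤ
  | up k => k
  | low k => k

/-- bound of a curve: max of the endpoint indices -/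
def bnd : Curve → ℤ := Sym2.lift ⟨fun x y => max (idx x) (idx y), fun _ _ => max_comm _ _⟩

@[simp] lemma bnd_mk (x y : MPoint) : bnd s(x, y) = max (idx x) (idx y) := rfl

lemma gtAt_intro (p x y : MPoint) {u v : Curve} (hx : x ≠ p) (hy : y ≠ p)
    (hu : u = s(p, x)) (hv : v = s(p, y)) (h : key p y < key p x) : GtAt p u v :=
  ⟨x, y, hx, hy, hu, hv, h⟩

/-! ### Crosses intro lemmas -/

lemma crosses1 {i j p q : ℤ} (h : (i < p ∧ p < j ∧ j < q) ∨ (p < i ∧ i < q ∧ q < j)) :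
    Crosses s(up i, up j) s(up p, up q) := Or.inl ⟨i, j, p, q, h, rfl, rfl⟩

lemma crosses2 {i j p q : ℤ} (h : i < p ∧ p < j) :
    Crosses s(up i, up j) s(up p, low q) := Or.inr (Or.inl ⟨i, j, p, q, h, rfl, rfl⟩)

lemma crosses3 {i j p q : ℤ} (h : (i > p ∧ p > j ∧ j > q) ∨ (p > i ∧ i > q ∧ q > j)) :
    Crosses s(low i, low j) s(low p, low q) :=
  Or.inr (Or.inr (Or.inl ⟨i, j, p, q, h, rfl, rfl⟩))

lemma crosses4 {i j p q : ℤ} (h : i > q ∧ q > j) :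
    Crosses s(low i, low j) s(up p, low q) :=
  Or.inr (Or.inr (Or.inr (Or.inl ⟨i, j, p, q, h, rfl, rfl⟩)))

lemma crosses5 {i j p q : ℤ} (h : p < i ∧ i < q) :
    Crosses s(up i, low j) s(up p, up q) :=
  Or.inr (Or.inr (Or.inr (Or.inr (Or.inl ⟨i, j, p, q, h, rfl, rfl⟩))))

lemma crosses6 {i j p q : ℤ} (h : p > j ∧ j > q) :
    Crosses s(up i, low j) s(low p, low q) :=
  Or.inr (Or.inr (Or.inr (Or.inr (Or.inr (Or.inl ⟨i, j, p, q, h, rfl, rfl⟩)))))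

lemma crosses7 {i j p q : ℤ} (h : (i > p ∧ j > q) ∨ (i < p ∧ j < q)) :
    Crosses s(up i, low j) s(up p, low q) :=
  Or.inr (Or.inr (Or.inr (Or.inr (Or.inr (Or.inr ⟨i, j, p, q, h, rfl, rfl⟩)))))

/-! ### Crosses elimination lemmas -/

/-- classification of curves crossing a connecting curve -/
lemma cross_conn_elim {w : Curve} {m n : ℤ} (h : Crosses w s(up m, low n)) :
    (∃ a b : ℤ, w = s(up a, up b) ∧ a < m ∧ m < b) ∨
    (∃ a b : ℤ, w = s(low a, low b) ∧ a > n ∧ n > b) ∨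
    (∃ a b : ℤ, w = s(up a, low b) ∧ ((a > m ∧ b > n) ∨ (a < m ∧ b < n))) := by
  rcases h with ⟨i,j,p,q,hc,h1,h2⟩|⟨i,j,p,q,hc,h1,h2⟩|⟨i,j,p,q,hc,h1,h2⟩|⟨i,j,p,q,hc,h1,h2⟩|
    ⟨i,j,p,q,hc,h1,h2⟩|⟨i,j,p,q,hc,h1,h2⟩|⟨i,j,p,q,hc,h1,h2⟩
  · simp [Sym2.eq_iff] at h2
  · rw [Sym2.eq_iff] at h2
    simp only [MPoint.up.injEq, MPoint.low.injEq, reduceCtorEq, and_false, false_and,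
      or_false, false_or] at h2
    obtain ⟨rfl, rfl⟩ := h2
    exact Or.inl ⟨i, j, h1, hc⟩
  · simp [Sym2.eq_iff] at h2
  · rw [Sym2.eq_iff] at h2
    simp only [MPoint.up.injEq, MPoint.low.injEq, reduceCtorEq, and_false, false_and,
      or_false, false_or] at h2
    obtain ⟨rfl, rfl⟩ := h2
    exact Or.inr (Or.inl ⟨i, j, h1, hc.1, hc.2⟩)
  · simp [Sym2.eq_iff] at h2
  · simp [Sym2.eq_iff] at h2
  · rw [Sym2.eq_iff] at h2
    simp only [MPoint.up.injEq, MPoint.low.injEq, reduceCtorEq, and_false, false_and,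
      or_false, false_or] at h2
    obtain ⟨rfl, rfl⟩ := h2
    exact Or.inr (Or.inr ⟨i, j, h1, hc⟩)

/-- classification of curves crossing a lower-lower curve -/
lemma cross_low_elim {w : Curve} {m n : ℤ} (hmn : n < m) (h : Crosses w s(low m, low n)) :
    (∃ a b : ℤ, w = s(low a, low b) ∧
      ((a > m ∧ m > b ∧ b > n) ∨ (m > a ∧ a > n ∧ n > b))) ∨
    (∃ a b : ℤ, w = s(up a, low b) ∧ m > b ∧ b > n) := by
  rcases h with ⟨i,j,p,q,hc,h1,h2⟩|⟨i,j,p,q,hc,h1,h2⟩|⟨i,j,p,q,hc,h1,h2⟩|⟨i,j,p,q,hc,h1,h2⟩|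
    ⟨i,j,p,q,hc,h1,h2⟩|⟨i,j,p,q,hc,h1,h2⟩|⟨i,j,p,q,hc,h1,h2⟩
  · simp [Sym2.eq_iff] at h2
  · simp [Sym2.eq_iff] at h2
  · rw [Sym2.eq_iff] at h2
    simp only [MPoint.low.injEq] at h2
    rcases h2 with ⟨rfl, rfl⟩ | ⟨rfl, rfl⟩
    · exact Or.inl ⟨i, j, h1, by omega⟩
    · exact Or.inl ⟨i, j, h1, by omega⟩
  · simp [Sym2.eq_iff] at h2
  · simp [Sym2.eq_iff] at h2
  · rw [Sym2.eq_iff] at h2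
    simp only [MPoint.low.injEq] at h2
    rcases h2 with ⟨rfl, rfl⟩ | ⟨rfl, rfl⟩
    · exact Or.inr ⟨i, j, h1, by omega⟩
    · exact Or.inr ⟨i, j, h1, by omega⟩
  · simp [Sym2.eq_iff] at h2

lemma cross_upup_lowlow {a b c d : ℤ} (h : Crosses s(up a, up b) s(low c, low d)) : False := by
  rcases h with ⟨i,j,p,q,hc,h1,h2⟩|⟨i,j,p,q,hc,h1,h2⟩|⟨i,j,p,q,hc,h1,h2⟩|⟨i,j,p,q,hc,h1,h2⟩|
    ⟨i,j,p,q,hc,h1,h2⟩|⟨i,j,p,q,hc,h1,h2⟩|⟨i,j,p,q,hc,h1,h2⟩ <;>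
    simp [Sym2.eq_iff] at h1 h2

lemma cross_lowlow_upup {a b c d : ℤ} (h : Crosses s(low a, low b) s(up c, up d)) : False := by
  rcases h with ⟨i,j,p,q,hc,h1,h2⟩|⟨i,j,p,q,hc,h1,h2⟩|⟨i,j,p,q,hc,h1,h2⟩|⟨i,j,p,q,hc,h1,h2⟩|
    ⟨i,j,p,q,hc,h1,h2⟩|⟨i,j,p,q,hc,h1,h2⟩|⟨i,j,p,q,hc,h1,h2⟩ <;>
    simp [Sym2.eq_iff] at h1 h2

/-- up-up crossing up-up: extraction, assuming the second curve's big index dominates -/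
lemma cross_upup_upup_elim {x y P i : ℤ} (h : Crosses s(up x, up y) s(up P, up i))
    (hxy : x < y) (hiy : i > y + 1) (hiP : i > P) : x < P ∧ P < y ∧ y < i := by
  rcases h with ⟨a,b,p,q,hc,h1,h2⟩|⟨a,b,p,q,hc,h1,h2⟩|⟨a,b,p,q,hc,h1,h2⟩|⟨a,b,p,q,hc,h1,h2⟩|
    ⟨a,b,p,q,hc,h1,h2⟩|⟨a,b,p,q,hc,h1,h2⟩|⟨a,b,p,q,hc,h1,h2⟩ <;>
    simp only [Sym2.eq_iff, MPoint.up.injEq, MPoint.low.injEq, reduceCtorEq, and_false,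
      false_and, or_false, false_or] at h1 h2 <;> try omega

/-- connecting crossing up-up: extraction -/
lemma cross_conn_upup_elim {x z P i : ℤ} (h : Crosses s(up x, low z) s(up P, up i))
    (hix : i > x) : P < x ∧ x < i := by
  rcases h with ⟨a,b,p,q,hc,h1,h2⟩|⟨a,b,p,q,hc,h1,h2⟩|⟨a,b,p,q,hc,h1,h2⟩|⟨a,b,p,q,hc,h1,h2⟩|
    ⟨a,b,p,q,hc,h1,h2⟩|⟨a,b,p,q,hc,h1,h2⟩|⟨a,b,p,q,hc,h1,h2⟩ <;>
    simp only [Sym2.eq_iff, MPoint.up.injEq, MPoint.low.injEq, reduceCtorEq, and_false,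
      false_and, or_false, false_or] at h1 h2 <;> try omega

/-- connecting crossing connecting: extraction -/
lemma cross_conn_conn_elim {x z i P : ℤ} (h : Crosses s(up x, low z) s(up i, low P)) :
    (x > i ∧ z > P) ∨ (x < i ∧ z < P) := by
  rcases h with ⟨a,b,p,q,hc,h1,h2⟩|⟨a,b,p,q,hc,h1,h2⟩|⟨a,b,p,q,hc,h1,h2⟩|⟨a,b,p,q,hc,h1,h2⟩|
    ⟨a,b,p,q,hc,h1,h2⟩|⟨a,b,p,q,hc,h1,h2⟩|⟨a,b,p,q,hc,h1,h2⟩ <;>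
    simp only [Sym2.eq_iff, MPoint.up.injEq, MPoint.low.injEq, reduceCtorEq, and_false,
      false_and, or_false, false_or] at h1 h2 <;> try omega

/-- low-low crossing connecting: extraction -/
lemma cross_lowlow_conn_elim {x y i P : ℤ} (h : Crosses s(low x, low y) s(up i, low P)) :
    (x > P ∧ P > y) ∨ (y > P ∧ P > x) := by
  rcases h with ⟨a,b,p,q,hc,h1,h2⟩|⟨a,b,p,q,hc,h1,h2⟩|⟨a,b,p,q,hc,h1,h2⟩|⟨a,b,p,q,hc,h1,h2⟩|
    ⟨a,b,p,q,hc,h1,h2⟩|⟨a,b,p,q,hc,h1,h2⟩|⟨a,b,p,q,hc,h1,h2⟩ <;>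
    simp only [Sym2.eq_iff, MPoint.up.injEq, MPoint.low.injEq, reduceCtorEq, and_false,
      false_and, or_false, false_or] at h1 h2 <;> try omega

/-- up-up crossing connecting: extraction -/
lemma cross_upup_conn_elim {x y m n : ℤ} (h : Crosses s(up x, up y) s(up m, low n)) :
    (x < m ∧ m < y) ∨ (y < m ∧ m < x) := by
  rcases h with ⟨a,b,p,q,hc,h1,h2⟩|⟨a,b,p,q,hc,h1,h2⟩|⟨a,b,p,q,hc,h1,h2⟩|⟨a,b,p,q,hc,h1,h2⟩|
    ⟨a,b,p,q,hc,h1,h2⟩|⟨a,b,p,q,hc,h1,h2⟩|⟨a,b,p,q,hc,h1,h2⟩ <;>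
    simp only [Sym2.eq_iff, MPoint.up.injEq, MPoint.low.injEq, reduceCtorEq, and_false,
      false_and, or_false, false_or] at h1 h2 <;> try omega

/-- connecting crossing low-low: extraction -/
lemma cross_conn_lowlow_elim {x z m n : ℤ} (h : Crosses s(up x, low z) s(low m, low n)) :
    (m > z ∧ z > n) ∨ (n > z ∧ z > m) := by
  rcases h with ⟨a,b,p,q,hc,h1,h2⟩|⟨a,b,p,q,hc,h1,h2⟩|⟨a,b,p,q,hc,h1,h2⟩|⟨a,b,p,q,hc,h1,h2⟩|
    ⟨a,b,p,q,hc,h1,h2⟩|⟨a,b,p,q,hc,h1,h2⟩|⟨a,b,p,q,hc,h1,h2⟩ <;>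
    simp only [Sym2.eq_iff, MPoint.up.injEq, MPoint.low.injEq, reduceCtorEq, and_false,
      false_and, or_false, false_or] at h1 h2 <;> try omega

end Strip
namespace Strip

open MPoint

/-! ### Main lemma, upper case -/

lemma main_up {T : Set Curve} (h : TauCompact T) (P j₀ : ℤ)
    (hj₀ : ∀ k : ℤ, k < j₀ → s(up P, low k) ∉ T)
    (hbig : ∀ j : ℤ, ∃ i : ℤ, j < i ∧ s(up P, up i) ∈ T) : False := by
  have hu : IsArc s(up (P+1), low j₀) := by
    constructor
    · simp [Sym2.mk_isDiag_iff]
    · rintro ⟨k, hk | hk⟩ <;> simp [Sym2.eq_iff] at hk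
  obtain ⟨S0, hfin, hsub, hbasis⟩ := h _ hu
  obtain ⟨N, hN⟩ := (hfin.image bnd).bddAbove
  obtain ⟨i, hij, hiT⟩ := hbig (max (N + 3) (P + 2))
  have hiN : N + 3 < i := lt_of_le_of_lt (le_max_left _ _) hij
  have hiP : P + 2 < i := lt_of_le_of_lt (le_max_right _ _) hij
  have hu₁ : s(up P, up i) ∈ crossSet T s(up (P+1), low j₀) :=
    ⟨hiT, crosses2 ⟨by omega, by omega⟩⟩
  obtain ⟨u₂, hu₂S, hcross, hmid⟩ := hbasis _ hu₁
  have hu₂T : u₂ ∈ T := (hsub hu₂S).1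
  have hu₂u : Crosses u₂ s(up (P+1), low j₀) := (hsub hu₂S).2
  have hbnd : bnd u₂ ≤ N := hN ⟨u₂, hu₂S, rfl⟩
  rcases cross_conn_elim hu₂u with ⟨a, b, rfl, ha, hb⟩ | ⟨a, b, rfl, ha, hb⟩ |
    ⟨a, b, rfl, hab⟩
  · -- u₂ = s(up a, up b), a < P+1 < b
    rw [bnd_mk] at hbnd
    simp only [idx] at hbnd
    have htau : tau s(up a, up b) = s(up (a+1), up (b+1)) := by
      simp [tau, Sym2.map_pair_eq, tauP]
    rw [htau] at hcross
    obtain ⟨h1, h2, h3⟩ := cross_upup_upup_elim hcross (by omega) (by omega) (by omega)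
    -- a+1 < P, P < b+1, b+1 < i
    have hc21 : Crosses s(up a, up b) s(up P, up i) :=
      crosses1 (Or.inl ⟨by omega, by omega, by omega⟩)
    have hmt : IsMiddleTerm s(up a, up b) s(up P, up i) s(up b, up i) := by
      refine ⟨by simp [Sym2.mk_isDiag_iff]; omega, up b, up i, ?_, ?_⟩
      · refine gtAt_intro (up b) (up i) (up a) (by simp; omega) (by simp; omega)
          rfl Sym2.eq_swap ?_
        rw [key_up_up, key_up_up, if_neg (by omega), if_pos (by omega)]
        exact toLex_lt (by omega)
      · refine gtAt_intro (up i) (up P) (up b) (by simp; omega) (by simp; omega)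
          Sym2.eq_swap Sym2.eq_swap ?_
        rw [key_up_up, key_up_up, if_neg (by omega), if_neg (by omega)]
        exact toLex_lt (by omega)
    have h3' := (hmid hc21 _ hmt).2
    rcases cross_upup_conn_elim h3' with ⟨h4, h5⟩ | ⟨h4, h5⟩ <;> omega
  · -- u₂ = s(low a, low b): tau u₂ cannot cross an upper-upper curve
    have htau : tau s(low a, low b) = s(low (a+1), low (b+1)) := by
      simp [tau, Sym2.map_pair_eq, tauP]
    rw [htau] at hcross
    exact cross_lowlow_upup hcross
  · -- u₂ = s(up a, low b), connecting
    rw [bnd_mk] at hbnd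
    simp only [idx] at hbnd
    have htau : tau s(up a, low b) = s(up (a+1), low (b+1)) := by
      simp [tau, Sym2.map_pair_eq, tauP]
    rw [htau] at hcross
    obtain ⟨h1, h2⟩ := cross_conn_upup_elim hcross (by omega)
    -- P < a + 1
    rcases hab with ⟨ha1, hb1⟩ | ⟨ha1, hb1⟩
    · -- a > P + 1: middle term s(up a, up i)
      have hc : Crosses s(up a, low b) s(up P, up i) := crosses5 ⟨by omega, by omega⟩
      have hmt : IsMiddleTerm s(up a, low b) s(up P, up i) s(up a, up i) := by
        refine ⟨by simp [Sym2.mk_isDiag_iff]; omega, up a, up i, ?_, ?_⟩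
        · refine gtAt_intro (up a) (up i) (low b) (by simp; omega) (by simp)
            rfl rfl ?_
          rw [key_up_up, key_up_low, if_pos (by omega)]
          exact toLex_lt (by omega)
        · refine gtAt_intro (up i) (up P) (up a) (by simp; omega) (by simp; omega)
            Sym2.eq_swap Sym2.eq_swap ?_
          rw [key_up_up, key_up_up, if_neg (by omega), if_neg (by omega)]
          exact toLex_lt (by omega)
      have h3' := (hmid hc _ hmt).2
      rcases cross_upup_conn_elim h3' with ⟨h4, h5⟩ | ⟨h4, h5⟩ <;> omega
    · -- a < P + 1 and b < j₀: then a = P and u₂ ∈ T contradicts hj₀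
      have haP : a = P := by omega
      subst haP
      exact hj₀ b hb1 hu₂T

/-! ### Main lemma, lower case -/

lemma main_low {T : Set Curve} (h : TauCompact T) (P j₀ : ℤ)
    (hj₀ : ∀ k : ℤ, k < j₀ → s(low P, low k) ∉ T)
    (hbig : ∀ j : ℤ, ∃ i : ℤ, j < i ∧ s(low P, up i) ∈ T) : False := by
  set f : ℤ := min j₀ (P - 1) with hf
  have hfP : f ≤ P - 1 := min_le_right _ _
  have hfj : f ≤ j₀ := min_le_left _ _
  have hu : IsArc s(low (P+1), low f) := by
    constructor
    · simp [Sym2.mk_isDiag_iff]; omega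
    · rintro ⟨k, hk | hk⟩ <;> simp [Sym2.eq_iff] at hk <;> omega
  obtain ⟨S0, hfin, hsub, hbasis⟩ := h _ hu
  obtain ⟨N, hN⟩ := (hfin.image bnd).bddAbove
  obtain ⟨i, hij, hiT⟩ := hbig (max (N + 3) (P + 2))
  have hiN : N + 3 < i := lt_of_le_of_lt (le_max_left _ _) hij
  have hiP : P + 2 < i := lt_of_le_of_lt (le_max_right _ _) hij
  rw [Sym2.eq_swap] at hiT
  have hu₁ : s(up i, low P) ∈ crossSet T s(low (P+1), low f) :=
    ⟨hiT, crosses6 ⟨by omega, by omega⟩⟩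
  obtain ⟨u₂, hu₂S, hcross, hmid⟩ := hbasis _ hu₁
  have hu₂T : u₂ ∈ T := (hsub hu₂S).1
  have hu₂u : Crosses u₂ s(low (P+1), low f) := (hsub hu₂S).2
  have hbnd : bnd u₂ ≤ N := hN ⟨u₂, hu₂S, rfl⟩
  rcases cross_low_elim (by omega) hu₂u with ⟨a, b, rfl, hab⟩ | ⟨a, b, rfl, ha, hb⟩
  · -- u₂ = s(low a, low b), interleaved with {P+1, f}; in both cases a > b
    rw [bnd_mk] at hbnd
    simp only [idx] at hbnd
    have htau : tau s(low a, low b) = s(low (a+1), low (b+1)) := by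
      simp [tau, Sym2.map_pair_eq, tauP]
    rw [htau] at hcross
    have hab' : b < a := by omega
    have h8 : a + 1 > P ∧ P > b + 1 := by
      rcases cross_lowlow_conn_elim hcross with h | h <;> omega
    by_cases haP : a = P
    · -- u₂ = s(low P, low b) with b < f ≤ j₀, contradicting hj₀
      subst haP
      exact hj₀ b (by omega) hu₂T
    · -- a ≥ P + 1: middle term s(up i, low a)
      have haP' : P + 1 ≤ a := by omega
      have hc : Crosses s(low a, low b) s(up i, low P) := crosses4 ⟨by omega, by omega⟩
      have hmt : IsMiddleTerm s(low a, low b) s(up i, low P) s(up i, low a) := by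
        refine ⟨by simp, low a, up i, ?_, ?_⟩
        · refine gtAt_intro (low a) (up i) (low b) (by simp) (by simp; omega)
            Sym2.eq_swap rfl ?_
          rw [key_low_up, key_low_low, if_neg (by omega)]
          exact toLex_lt (by omega)
        · refine gtAt_intro (up i) (low P) (low a) (by simp) (by simp)
            rfl rfl ?_
          rw [key_up_low, key_up_low]
          exact toLex_lt (by omega)
      have h3' := (hmid hc _ hmt).2
      rcases cross_conn_lowlow_elim h3' with h | h <;> omega
  · -- u₂ = s(up a, low b), connecting with P+1 > b > f
    rw [bnd_mk] at hbnd
    simp only [idx] at hbnd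
    have htau : tau s(up a, low b) = s(up (a+1), low (b+1)) := by
      simp [tau, Sym2.map_pair_eq, tauP]
    rw [htau] at hcross
    have h8 : b + 1 < P := by
      rcases cross_conn_conn_elim hcross with h | h <;> omega
    have hc : Crosses s(up a, low b) s(up i, low P) := crosses7 (Or.inr ⟨by omega, by omega⟩)
    have hmt : IsMiddleTerm s(up a, low b) s(up i, low P) s(up a, up i) := by
      refine ⟨by simp [Sym2.mk_isDiag_iff]; omega, up a, up i, ?_, ?_⟩
      · refine gtAt_intro (up a) (up i) (low b) (by simp; omega) (by simp)
          rfl rfl ?_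
        rw [key_up_up, key_up_low, if_pos (by omega)]
        exact toLex_lt (by omega)
      · refine gtAt_intro (up i) (low P) (up a) (by simp) (by simp; omega)
          rfl Sym2.eq_swap ?_
        rw [key_up_up, key_up_low, if_neg (by omega)]
        exact toLex_lt (by omega)
    have h3' := (hmid hc _ hmt).2
    exact cross_upup_lowlow h3'

end Strip
namespace Strip

open MPoint

/-! ### The up/down reflection -/

/-- reflection of marked points -/
def rhoP : MPoint → MPoint
  | up i => low i
  | low i => up i

/-- reflection of curves -/
def rho (c : Curve) : Curve := c.map rhoP

@[simp] lemma rhoP_rhoP (x : MPoint) : rhoP (rhoP x) = x := by cases x <;> rfl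

lemma rhoP_inj : Function.Injective rhoP := by
  intro a b h
  rw [← rhoP_rhoP a, h, rhoP_rhoP]

lemma rho_pair (x y : MPoint) : rho s(x, y) = s(rhoP x, rhoP y) := Sym2.map_pair_eq _ _ _

@[simp] lemma rho_rho (c : Curve) : rho (rho c) = c := by
  induction c using Sym2.ind with
  | _ x y => simp [rho_pair]

lemma key_rhoP (p x : MPoint) : key (rhoP p) (rhoP x) = key p x := by
  cases p <;> cases x <;> rfl

lemma crosses_rho {u v : Curve} (h : Crosses u v) : Crosses (rho u) (rho v) := by
  rcases h with ⟨i,j,p,q,hc,rfl,rfl⟩|⟨i,j,p,q,hc,rfl,rfl⟩|⟨i,j,p,q,hc,rfl,rfl⟩|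
    ⟨i,j,p,q,hc,rfl,rfl⟩|⟨i,j,p,q,hc,rfl,rfl⟩|⟨i,j,p,q,hc,rfl,rfl⟩|⟨i,j,p,q,hc,rfl,rfl⟩ <;>
    rw [rho_pair, rho_pair] <;> simp only [rhoP]
  · rw [show s(low i, low j) = s(low j, low i) from Sym2.eq_swap,
      show s(low p, low q) = s(low q, low p) from Sym2.eq_swap]
    exact crosses3 (by omega)
  · rw [show s(low i, low j) = s(low j, low i) from Sym2.eq_swap,
      show s(low p, up q) = s(up q, low p) from Sym2.eq_swap]
    exact crosses4 ⟨by omega, by omega⟩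
  · rw [show s(up i, up j) = s(up j, up i) from Sym2.eq_swap,
      show s(up p, up q) = s(up q, up p) from Sym2.eq_swap]
    exact crosses1 (by omega)
  · rw [show s(up i, up j) = s(up j, up i) from Sym2.eq_swap,
      show s(low p, up q) = s(up q, low p) from Sym2.eq_swap]
    exact crosses2 ⟨by omega, by omega⟩
  · rw [show s(low i, up j) = s(up j, low i) from Sym2.eq_swap,
      show s(low p, low q) = s(low q, low p) from Sym2.eq_swap]
    exact crosses6 ⟨by omega, by omega⟩
  · rw [show s(low i, up j) = s(up j, low i) from Sym2.eq_swap,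
      show s(up p, up q) = s(up q, up p) from Sym2.eq_swap]
    exact crosses5 ⟨by omega, by omega⟩
  · rw [show s(low i, up j) = s(up j, low i) from Sym2.eq_swap,
      show s(low p, up q) = s(up q, low p) from Sym2.eq_swap]
    exact crosses7 (by omega)

lemma gtAt_rho {p : MPoint} {u v : Curve} (h : GtAt p u v) :
    GtAt (rhoP p) (rho u) (rho v) := by
  obtain ⟨x, y, hx, hy, hu, hv, hk⟩ := h
  refine ⟨rhoP x, rhoP y, fun e => hx (rhoP_inj e), fun e => hy (rhoP_inj e),
    by rw [hu, rho_pair], by rw [hv, rho_pair], ?_⟩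
  rwa [key_rhoP, key_rhoP]

lemma isDiag_rho {c : Curve} (h : (rho c).IsDiag) : c.IsDiag := by
  induction c using Sym2.ind with
  | _ x y =>
    rw [rho_pair, Sym2.mk_isDiag_iff] at h
    rw [Sym2.mk_isDiag_iff]
    exact rhoP_inj h

lemma middle_rho {u₂ u₁ u₃ : Curve} (h : IsMiddleTerm u₂ u₁ u₃) :
    IsMiddleTerm (rho u₂) (rho u₁) (rho u₃) := by
  obtain ⟨hd, p₁, p₂, h1, h2⟩ := h
  exact ⟨fun e => hd (isDiag_rho e), rhoP p₁, rhoP p₂,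
    gtAt_rho h1, gtAt_rho h2⟩

lemma isEdge_rho {c : Curve} (h : IsEdge c) : IsEdge (rho c) := by
  obtain ⟨k, hk | hk⟩ := h
  · exact ⟨k, Or.inr (by rw [hk, rho_pair]; rfl)⟩
  · exact ⟨k, Or.inl (by rw [hk, rho_pair]; rfl)⟩

lemma isArc_rho {c : Curve} (h : IsArc c) : IsArc (rho c) := by
  refine ⟨fun hd => h.1 (isDiag_rho hd), fun he => h.2 ?_⟩
  have := isEdge_rho he
  rwa [rho_rho] at this

lemma mem_rho_image {T : Set Curve} {c : Curve} : c ∈ rho '' T ↔ rho c ∈ T := by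
  constructor
  · rintro ⟨w, hw, rfl⟩
    rwa [rho_rho]
  · intro h
    exact ⟨rho c, h, rho_rho c⟩

lemma tau_rho (c : Curve) : tau (rho c) = rho (tau c) := by
  induction c using Sym2.ind with
  | _ x y =>
    rw [rho_pair, tau, tau, Sym2.map_pair_eq, Sym2.map_pair_eq, rho_pair]
    cases x <;> cases y <;> rfl

lemma tauCompact_rho {T : Set Curve} (h : TauCompact T) : TauCompact (rho '' T) := by
  intro u hu
  obtain ⟨S0, hfin, hsub, hbasis⟩ := h (rho u) (isArc_rho hu)
  refine ⟨rho '' S0, hfin.image rho, ?_, ?_⟩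
  · rintro v ⟨w, hw, rfl⟩
    obtain ⟨hwT, hwc⟩ := hsub hw
    exact ⟨mem_rho_image.mpr (by rwa [rho_rho]), by
      have := crosses_rho hwc
      rwa [rho_rho] at this⟩
  · rintro u₁ ⟨hu₁T, hu₁c⟩
    have hw₁ : rho u₁ ∈ crossSet T (rho u) :=
      ⟨mem_rho_image.mp hu₁T, crosses_rho hu₁c⟩
    obtain ⟨w₂, hw₂S, hw₂c, hw₂m⟩ := hbasis _ hw₁
    refine ⟨rho w₂, ⟨w₂, hw₂S, rfl⟩, ?_, ?_⟩
    · rw [tau_rho]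
      have := crosses_rho hw₂c
      rwa [rho_rho] at this
    · intro hc u₃ hmt
      have hc' : Crosses w₂ (rho u₁) := by
        have := crosses_rho hc
        rwa [rho_rho] at this
      have hmt' : IsMiddleTerm w₂ (rho u₁) (rho u₃) := by
        have := middle_rho hmt
        rwa [rho_rho] at this
      obtain ⟨hT, hcr⟩ := hw₂m hc' _ hmt'
      refine ⟨mem_rho_image.mpr hT, ?_⟩
      have := crosses_rho hcr
      rwa [rho_rho, rho_rho] at this

/-! ### Clause 1 and the theorem -/

lemma clause1 {T : Set Curve} (h : TauCompact T) (p : MPoint) :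
    LowerRightBounded T p → UpperRightBounded T p := by
  intro hlrb
  by_contra hurb
  rw [UpperRightBounded] at hurb
  push_neg at hurb
  obtain ⟨j₀, hj₀⟩ := hlrb
  cases p with
  | up P =>
    exact main_up h P j₀ hj₀ hurb
  | low P =>
    exact main_low h P j₀ hj₀ hurb

lemma clause2 {T : Set Curve} (h : TauCompact T) (p : MPoint) :
    UpperLeftBounded T p → LowerLeftBounded T p := by
  intro hulb
  have hlrb : LowerRightBounded (rho '' T) (rhoP p) := by
    obtain ⟨j, hj⟩ := hulb
    refine ⟨j, fun i hi hin => hj i hi ?_⟩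
    rw [mem_rho_image, rho_pair] at hin
    rwa [show rhoP (rhoP p) = p from rhoP_rhoP p] at hin
  obtain ⟨j, hj⟩ := clause1 (tauCompact_rho h) (rhoP p) hlrb
  refine ⟨j, fun i hi hin => hj i hi ?_⟩
  rw [mem_rho_image, rho_pair, rhoP_rhoP]
  exact hin

end Strip

open Strip in
/-- Every τ-compact set of arcs satisfies condition (B). -/
theorem tauCompact_condB (T : Set Curve) (hT : ∀ c ∈ T, IsArc c)
    (h : TauCompact T) : CondB T :=
  fun p => ⟨Strip.clause1 h p, Strip.clause2 h p⟩
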